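/- arXiv:math/0210096 — 2 statements merged into one kernel-verified Lean document; each statement's English description precedes it below -/
import Mathlib

section
/- Let k be a commutative ring, A a Z-graded k-algebra such that the structure map k → A₀ is injective (k ⊆ A₀), f₁,…,fₙ ∈ A homogeneous of degree d ≥ 1, h : k[T₁,…,Tₙ] → A the k-algebra morphism sending Tᵢ to fᵢ, and β : A[T₁,…,Tₙ] → A[Z,Z⁻¹] the A-algebra morphism sending Tᵢ to fᵢ·Z⁻¹. Then ker(h) = ker(β) ∩ k[T₁,…,Tₙ] = TF_{(Z)}((f₁−T₁Z,…,fₙ−TₙZ)) ∩ k[T₁,…,Tₙ], the inertia forms being computed in A[T₁,…,Tₙ,Z] with respect to the ideal (Z). -/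
/-- The ideal of inertia forms (Trägheitsformen) of `I` with respect to `J`. -/
noncomputable def inertiaForms {R : Type*} [CommRing R] (J I : Ideal R) : Ideal R :=
  ⨆ n : ℕ, I.colon ((J ^ n : Ideal R) : Set R)

/-- The `A`-algebra morphism `β : A[T₁,…,Tₙ] → A[Z,Z⁻¹]`, `Tᵢ ↦ fᵢ·Z⁻¹`. -/
noncomputable def reesBeta {A : Type*} [CommRing A] {n : ℕ} (f : Fin n → A) :
    MvPolynomial (Fin n) A →ₐ[A] LaurentPolynomial A :=
  MvPolynomial.aeval fun i => LaurentPolynomial.C (f i) * LaurentPolynomial.T (-1)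

/-- The ideal `(f₁ - T₁Z, …, fₙ - TₙZ)` of `A[T₁,…,Tₙ][Z]`. -/
noncomputable def fTZIdeal {A : Type*} [CommRing A] {n : ℕ} (f : Fin n → A) :
    Ideal (Polynomial (MvPolynomial (Fin n) A)) :=
  Ideal.span (Set.range fun i =>
    Polynomial.C (MvPolynomial.C (f i)) - Polynomial.C (MvPolynomial.X i) * Polynomial.X)

open MvPolynomial LaurentPolynomial

section Aux

variable {A : Type*} [CommRing A] {n : ℕ} (f : Fin n → A)

/-- Evaluation of a Laurent polynomial at `T = 1`. -/
noncomputable def laurentEps (A : Type*) [CommRing A] : LaurentPolynomial A →+* A :=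
  AddMonoidAlgebra.liftNCRingHom (RingHom.id A) 1 (fun _ _ => Commute.one_right _)

lemma laurentEps_C (a : A) : laurentEps A (LaurentPolynomial.C a) = a := by
  show laurentEps A (AddMonoidAlgebra.single 0 a) = a
  rw [laurentEps, AddMonoidAlgebra.liftNCRingHom]
  erw [AddMonoidAlgebra.liftNC_single]
  simp

lemma laurentEps_T (z : ℤ) : laurentEps A (LaurentPolynomial.T z) = 1 := by
  show laurentEps A (AddMonoidAlgebra.single z 1) = 1
  rw [laurentEps, AddMonoidAlgebra.liftNCRingHom]
  erw [AddMonoidAlgebra.liftNC_single]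
  simp

lemma T_sum {ι : Type*} (s : Finset ι) (g : ι → ℤ) :
    (LaurentPolynomial.T (∑ i ∈ s, g i) : LaurentPolynomial A) =
      ∏ i ∈ s, LaurentPolynomial.T (g i) := by
  classical
  induction s using Finset.induction_on with
  | empty => simp
  | @insert _ _ h ih => rw [Finset.sum_insert h, Finset.prod_insert h, LaurentPolynomial.T_add, ih]

lemma reesBeta_monomial (m : Fin n →₀ ℕ) (c : A) :
    reesBeta f (MvPolynomial.monomial m c) =
      LaurentPolynomial.C (c * m.prod fun i e => f i ^ e) *
        LaurentPolynomial.T (-(m.sum fun _ e => (e : ℤ))) := by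
  classical
  rw [reesBeta, MvPolynomial.aeval_monomial]
  rw [show (algebraMap A (LaurentPolynomial A)) c = LaurentPolynomial.C c from rfl]
  rw [map_mul]
  have : (m.prod fun i e => (LaurentPolynomial.C (f i) * LaurentPolynomial.T (-1)) ^ e) =
      LaurentPolynomial.C (m.prod fun i e => f i ^ e) *
        LaurentPolynomial.T (-(m.sum fun _ e => (e : ℤ))) := by
    rw [Finsupp.prod, Finsupp.prod, Finsupp.sum]
    calc ∏ a ∈ m.support, (LaurentPolynomial.C (f a) * LaurentPolynomial.T (-1)) ^ m a
        = ∏ a ∈ m.support,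
            (LaurentPolynomial.C (f a ^ m a) * LaurentPolynomial.T (-(m a : ℤ))) := by
          refine Finset.prod_congr rfl fun i _ => ?_
          rw [mul_pow, ← map_pow, LaurentPolynomial.T_pow, mul_comm ((m i : ℕ) : ℤ) (-1)]
          norm_num
      _ = (∏ a ∈ m.support, LaurentPolynomial.C (f a ^ m a)) *
            ∏ a ∈ m.support, LaurentPolynomial.T (-(m a : ℤ)) := Finset.prod_mul_distrib
      _ = _ := by
          rw [← T_sum, ← map_prod]
          congr 1
          rw [Finset.sum_neg_distrib]
  rw [this, mul_assoc]

lemma reesBeta_homogeneous {e : ℕ} {p : MvPolynomial (Fin n) A} (hp : p.IsHomogeneous e) :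
    reesBeta f p = LaurentPolynomial.C (MvPolynomial.aeval f p) *
      LaurentPolynomial.T (-(e : ℤ)) := by
  conv_lhs => rw [← p.support_sum_monomial_coeff]
  conv_rhs => rw [← p.support_sum_monomial_coeff]
  rw [map_sum, map_sum, map_sum, Finset.sum_mul]
  refine Finset.sum_congr rfl fun m hm => ?_
  have hdeg : (m.sum fun _ e => (e : ℤ)) = (e : ℤ) := by
    have h1 : m.degree = e := by
      rw [Finsupp.degree_eq_weight_one]; exact hp (MvPolynomial.mem_support_iff.mp hm)
    rw [← h1, Finsupp.degree, Finsupp.sum]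
    push_cast
    exact (Nat.cast_sum m.support (fun a => m a)).symm
  rw [reesBeta_monomial, hdeg, MvPolynomial.aeval_monomial]
  simp

end Aux

section Aux2

variable {k A : Type*} [CommRing k] [CommRing A] [Algebra k A] {n : ℕ} (f : Fin n → A)

lemma eps_reesBeta_map (p : MvPolynomial (Fin n) k) :
    laurentEps A (reesBeta f (MvPolynomial.map (algebraMap k A) p)) =
      MvPolynomial.aeval f p := by
  have h : (laurentEps A).comp ((reesBeta f).toRingHom.comp
      (MvPolynomial.map (algebraMap k A)))
      = (MvPolynomial.aeval f : MvPolynomial (Fin n) k →ₐ[k] A).toRingHom := by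
    apply MvPolynomial.ringHom_ext
    · intro a
      simp only [RingHom.comp_apply, MvPolynomial.map_C, AlgHom.toRingHom_eq_coe,
        RingHom.coe_coe, MvPolynomial.aeval_C]
      rw [reesBeta, MvPolynomial.aeval_C]
      rw [show (algebraMap A (LaurentPolynomial A)) (algebraMap k A a)
        = LaurentPolynomial.C (algebraMap k A a) from rfl, laurentEps_C]
    · intro i
      simp only [RingHom.comp_apply, MvPolynomial.map_X, AlgHom.toRingHom_eq_coe,
        RingHom.coe_coe, MvPolynomial.aeval_X]
      rw [reesBeta, MvPolynomial.aeval_X, map_mul, laurentEps_C, laurentEps_T, mul_one]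
  exact DFunLike.congr_fun h p

end Aux2

section Aux3

variable {k A : Type*} [CommRing k] [CommRing A] [Algebra k A]
  (𝒜 : ℤ → Submodule k A) [GradedAlgebra 𝒜] {n : ℕ} {d : ℤ} {f : Fin n → A}
  (hf : ∀ i, f i ∈ 𝒜 d)

include hf in
lemma aeval_homogeneous_mem {e : ℕ} {p : MvPolynomial (Fin n) k}
    (hp : p.IsHomogeneous e) : MvPolynomial.aeval f p ∈ 𝒜 (d * e) := by
  classical
  rw [← p.support_sum_monomial_coeff, map_sum]
  refine Submodule.sum_mem _ fun m hm => ?_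
  rw [MvPolynomial.aeval_monomial]
  have h0 : algebraMap k A (MvPolynomial.coeff m p) ∈ 𝒜 0 :=
    SetLike.algebraMap_mem_graded 𝒜 _
  have h1 : (m.prod fun i e => f i ^ e) ∈ 𝒜 (d * e) := by
    rw [Finsupp.prod_pow]
    have h2 := SetLike.prod_pow_mem_graded 𝒜 (F := Finset.univ) (g := f)
      (i := fun _ => d) (fun i => m i) (fun i _ => hf i)
    have h3 : (∑ i : Fin n, m i • d) = d * e := by
      have h4 : (∑ i : Fin n, (m i : ℤ)) = (e : ℤ) := by
        have h5 : m.degree = e := by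
          rw [Finsupp.degree_eq_weight_one]
          exact hp (MvPolynomial.mem_support_iff.mp hm)
        rw [← h5, Finsupp.degree]
        rw [← Finset.sum_subset (Finset.subset_univ m.support)
          (fun x _ hx => by simpa using Finsupp.notMem_support_iff.mp hx)]
        push_cast
        exact (Nat.cast_sum m.support (fun a => m a)).symm
      calc (∑ i : Fin n, m i • d) = (∑ i : Fin n, (m i : ℤ)) * d := by
            simp [Finset.sum_mul]
        _ = d * e := by rw [h4, mul_comm]
    rwa [h3] at h2
  have := SetLike.mul_mem_graded h0 h1
  rwa [zero_add] at this

include 𝒜 hf in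
lemma aeval_homogeneousComponent_eq_zero (hd : d ≠ 0) {p : MvPolynomial (Fin n) k}
    (hp : MvPolynomial.aeval f p = 0) (e : ℕ) :
    MvPolynomial.aeval f (MvPolynomial.homogeneousComponent e p) = 0 := by
  classical
  by_cases he : e ∈ Finset.range (p.totalDegree + 1)
  · have hsum : ∑ i ∈ Finset.range (p.totalDegree + 1),
        MvPolynomial.aeval f (MvPolynomial.homogeneousComponent i p) = 0 := by
      rw [← map_sum, MvPolynomial.sum_homogeneousComponent, hp]
    have hproj := congrArg (GradedRing.proj 𝒜 (d * e)) hsum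
    rw [map_sum, map_zero] at hproj
    rw [Finset.sum_eq_single e (fun i _ hie => ?_) (fun h => absurd he h)] at hproj
    · rw [GradedRing.proj_apply, DirectSum.decompose_of_mem_same 𝒜
        (aeval_homogeneous_mem 𝒜 hf (MvPolynomial.homogeneousComponent_isHomogeneous e p))]
        at hproj
      exact hproj
    · rw [GradedRing.proj_apply, DirectSum.decompose_of_mem_ne 𝒜
        (aeval_homogeneous_mem 𝒜 hf (MvPolynomial.homogeneousComponent_isHomogeneous i p))]
      intro hcon
      exact hie (Nat.cast_injective (mul_left_cancel₀ hd hcon))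
  · rw [MvPolynomial.homogeneousComponent_eq_zero _ _ (by simpa using he), map_zero]

include 𝒜 hf in
lemma reesBeta_map_eq_zero (hd : d ≠ 0) {p : MvPolynomial (Fin n) k}
    (hp : MvPolynomial.aeval f p = 0) :
    reesBeta f (MvPolynomial.map (algebraMap k A) p) = 0 := by
  classical
  conv_lhs => rw [← MvPolynomial.sum_homogeneousComponent p]
  rw [map_sum, map_sum]
  refine Finset.sum_eq_zero fun e _ => ?_
  rw [reesBeta_homogeneous f
    ((MvPolynomial.homogeneousComponent_isHomogeneous e p).map (algebraMap k A)),
    MvPolynomial.aeval_map_algebraMap,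
    aeval_homogeneousComponent_eq_zero 𝒜 hf hd hp e, map_zero, zero_mul]

end Aux3

section Aux4
set_option maxHeartbeats 1000000

variable {A : Type*} [CommRing A] {n : ℕ} (f : Fin n → A)

lemma mk_gen (i : Fin n) :
    Ideal.Quotient.mk (fTZIdeal f) (Polynomial.C (MvPolynomial.X i) * Polynomial.X)
      = Ideal.Quotient.mk (fTZIdeal f) (Polynomial.C (MvPolynomial.C (f i))) := by
  rw [Ideal.Quotient.eq]
  have h : Polynomial.C (MvPolynomial.C (f i)) -
      Polynomial.C (MvPolynomial.X i) * Polynomial.X ∈ fTZIdeal f :=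
    Ideal.subset_span ⟨i, rfl⟩
  have h2 := neg_mem h
  rwa [neg_sub] at h2

lemma mk_X_pow_monomial (m : Fin n →₀ ℕ) (c : A) :
    Ideal.Quotient.mk (fTZIdeal f)
        (Polynomial.X ^ (m.sum fun _ e => e) * Polynomial.C (MvPolynomial.monomial m c))
      = Ideal.Quotient.mk (fTZIdeal f)
        (Polynomial.C (MvPolynomial.C (c * m.prod fun i e => f i ^ e))) := by
  classical
  have h1 : Polynomial.X ^ (m.sum fun _ e => e) *
      Polynomial.C (MvPolynomial.monomial m c) =
      Polynomial.C (MvPolynomial.C c) *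
        ∏ i ∈ m.support, (Polynomial.C (MvPolynomial.X i (R := A)) * Polynomial.X) ^ m i := by
    rw [MvPolynomial.monomial_eq, map_mul, Finsupp.prod, Finsupp.sum, map_prod,
      ← Finset.prod_pow_eq_pow_sum]
    simp_rw [map_pow, mul_pow]
    rw [Finset.prod_mul_distrib]
    ring
  have h2 : (Polynomial.C (MvPolynomial.C (c * m.prod fun i e => f i ^ e)) :
      Polynomial (MvPolynomial (Fin n) A)) =
      Polynomial.C (MvPolynomial.C c) *
        ∏ i ∈ m.support, (Polynomial.C (MvPolynomial.C (f i))) ^ m i := by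
    rw [map_mul, map_mul, Finsupp.prod, map_prod, map_prod]
    simp_rw [map_pow]
  rw [h1, h2, map_mul, map_mul, map_prod, map_prod]
  congr 1
  refine Finset.prod_congr rfl fun i _ => ?_
  rw [map_pow, map_pow, mk_gen]

lemma mk_X_pow_mul_C (q : MvPolynomial (Fin n) A) {e N : ℕ} (hq : q.IsHomogeneous e)
    (hN : e ≤ N) :
    Ideal.Quotient.mk (fTZIdeal f) (Polynomial.X ^ N * Polynomial.C q)
      = Ideal.Quotient.mk (fTZIdeal f)
        (Polynomial.X ^ (N - e) * Polynomial.C (MvPolynomial.C (MvPolynomial.aeval f q))) := by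
  classical
  conv_lhs => rw [← q.support_sum_monomial_coeff]
  have haev : MvPolynomial.aeval f q =
      ∑ m ∈ q.support, (MvPolynomial.coeff m q * m.prod fun i e => f i ^ e) := by
    conv_lhs => rw [← q.support_sum_monomial_coeff]
    rw [map_sum]
    refine Finset.sum_congr rfl fun m _ => ?_
    rw [MvPolynomial.aeval_monomial]
    simp
  rw [haev]
  conv_lhs => rw [map_sum, Finset.mul_sum, map_sum]
  conv_rhs => rw [map_sum, map_sum, Finset.mul_sum, map_sum]
  refine Finset.sum_congr rfl fun m hm => ?_
  have hdeg : (m.sum fun _ e => e) = e := by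
    have h5 : m.degree = e := by
      rw [Finsupp.degree_eq_weight_one]
      exact hq (MvPolynomial.mem_support_iff.mp hm)
    rw [← h5]
    rfl
  have hX : (Polynomial.X : Polynomial (MvPolynomial (Fin n) A)) ^ N =
      Polynomial.X ^ (N - e) * Polynomial.X ^ e := by
    rw [← pow_add, Nat.sub_add_cancel hN]
  rw [hX, mul_assoc, map_mul]
  conv_lhs => rw [show (Polynomial.X ^ e : Polynomial (MvPolynomial (Fin n) A))
    = Polynomial.X ^ (m.sum fun _ e => e) by rw [hdeg]]
  rw [mk_X_pow_monomial, ← map_mul]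

lemma X_pow_mul_C_map_mem {k : Type*} [CommRing k] [Algebra k A]
    (p : MvPolynomial (Fin n) k)
    (hvanish : ∀ e, MvPolynomial.aeval f (MvPolynomial.homogeneousComponent e p) = 0) :
    Polynomial.X ^ p.totalDegree * Polynomial.C (MvPolynomial.map (algebraMap k A) p)
      ∈ fTZIdeal f := by
  classical
  rw [← Ideal.Quotient.eq_zero_iff_mem]
  rw [show MvPolynomial.map (algebraMap k A) p
      = ∑ e ∈ Finset.range (p.totalDegree + 1),
          MvPolynomial.map (algebraMap k A) (MvPolynomial.homogeneousComponent e p) from by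
    rw [← map_sum, MvPolynomial.sum_homogeneousComponent]]
  rw [map_sum, Finset.mul_sum, map_sum]
  refine Finset.sum_eq_zero fun e he => ?_
  have hhom : (MvPolynomial.map (algebraMap k A)
      (MvPolynomial.homogeneousComponent e p)).IsHomogeneous e :=
    (MvPolynomial.homogeneousComponent_isHomogeneous e p).map _
  have hN : e ≤ p.totalDegree + 1 - 1 := by
    have := Finset.mem_range.mp he
    omega
  rw [mk_X_pow_mul_C f _ hhom (by omega : e ≤ p.totalDegree)]
  rw [MvPolynomial.aeval_map_algebraMap, hvanish e]
  simp

/-- The evaluation `A[T][Z] → A[Z,Z⁻¹]`, `Tᵢ ↦ fᵢ Z⁻¹`, `Z ↦ Z`. -/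
noncomputable def phiLaurent : Polynomial (MvPolynomial (Fin n) A) →+* LaurentPolynomial A :=
  Polynomial.eval₂RingHom (reesBeta f).toRingHom (LaurentPolynomial.T 1)

lemma phiLaurent_apply (q : Polynomial (MvPolynomial (Fin n) A)) :
    phiLaurent f q = q.eval₂ (reesBeta f).toRingHom (LaurentPolynomial.T 1) := rfl

lemma phiLaurent_fTZIdeal {x : Polynomial (MvPolynomial (Fin n) A)} (hx : x ∈ fTZIdeal f) :
    phiLaurent f x = 0 := by
  have hle : fTZIdeal f ≤ RingHom.ker (phiLaurent f) := by
    rw [fTZIdeal, Ideal.span_le]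
    rintro - ⟨i, rfl⟩
    simp only [SetLike.mem_coe, RingHom.mem_ker, map_sub, map_mul]
    rw [phiLaurent_apply, phiLaurent_apply, phiLaurent_apply]
    rw [Polynomial.eval₂_C, Polynomial.eval₂_C, Polynomial.eval₂_X]
    rw [show ((reesBeta f).toRingHom (MvPolynomial.C (f i)) : LaurentPolynomial A)
      = LaurentPolynomial.C (f i) by
        rw [AlgHom.toRingHom_eq_coe, RingHom.coe_coe, reesBeta, MvPolynomial.aeval_C]; rfl]
    rw [show ((reesBeta f).toRingHom (MvPolynomial.X i) : LaurentPolynomial A)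
      = LaurentPolynomial.C (f i) * LaurentPolynomial.T (-1) by
        rw [AlgHom.toRingHom_eq_coe, RingHom.coe_coe, reesBeta, MvPolynomial.aeval_X]]
    rw [mul_assoc, ← LaurentPolynomial.T_add]
    norm_num
  exact hle hx

lemma phiLaurent_X_pow_mul_C (N : ℕ) (g : MvPolynomial (Fin n) A) :
    phiLaurent f (Polynomial.X ^ N * Polynomial.C g)
      = LaurentPolynomial.T (N : ℤ) * reesBeta f g := by
  rw [map_mul, map_pow, phiLaurent_apply, phiLaurent_apply, Polynomial.eval₂_X,
    Polynomial.eval₂_C, LaurentPolynomial.T_pow, mul_one]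
  rw [show ((reesBeta f).toRingHom g : LaurentPolynomial A) = reesBeta f g from rfl]

end Aux4

/-- if `k ⊆ A₀` then
`ker h = ker β ∩ k[T₁,…,Tₙ] = TF_{(Z)}((f₁-T₁Z,…,fₙ-TₙZ)) ∩ k[T₁,…,Tₙ]`, the intersections
with `k[T₁,…,Tₙ]` being preimages under the canonical inclusions. -/
theorem statement5 {k A : Type*} [CommRing k] [CommRing A] [Algebra k A]
    (𝒜 : ℤ → Submodule k A) [GradedAlgebra 𝒜]
    (hinj : Function.Injective (algebraMap k A))
    (n : ℕ) (d : ℤ) (hd : 1 ≤ d) (f : Fin n → A) (hf : ∀ i, f i ∈ 𝒜 d) :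
    RingHom.ker (MvPolynomial.aeval f : MvPolynomial (Fin n) k →ₐ[k] A)
      = Ideal.comap (MvPolynomial.map (algebraMap k A)) (RingHom.ker (reesBeta f)) ∧
    RingHom.ker (MvPolynomial.aeval f : MvPolynomial (Fin n) k →ₐ[k] A)
      = Ideal.comap
          ((Polynomial.C : MvPolynomial (Fin n) A →+* Polynomial (MvPolynomial (Fin n) A)).comp
            (MvPolynomial.map (algebraMap k A)))
          (inertiaForms (Ideal.span {Polynomial.X}) (fTZIdeal f)) := by
  have hd0 : d ≠ 0 := by omega
  constructor
  · ext p
    rw [Ideal.mem_comap, RingHom.mem_ker, RingHom.mem_ker]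
    constructor
    · intro hp
      exact reesBeta_map_eq_zero 𝒜 hf hd0 hp
    · intro hp
      have h := eps_reesBeta_map f p
      rw [show MvPolynomial.map (algebraMap k A) p
        = (MvPolynomial.map (algebraMap k A)) p from rfl] at hp
      rw [hp, map_zero] at h
      exact h.symm
  · ext p
    rw [Ideal.mem_comap, RingHom.mem_ker, RingHom.comp_apply]
    constructor
    · intro hp
      have hv := aeval_homogeneousComponent_eq_zero 𝒜 hf hd0 hp
      have hmem := X_pow_mul_C_map_mem f p hv
      have hcolon : Polynomial.C (MvPolynomial.map (algebraMap k A) p) ∈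
          (fTZIdeal f).colon ((Ideal.span {Polynomial.X} ^ p.totalDegree : Ideal (Polynomial (MvPolynomial (Fin n) A))) : Set (Polynomial (MvPolynomial (Fin n) A))) := by
        rw [Ideal.span_singleton_pow, Ideal.mem_colon_span_singleton, mul_comm]
        exact hmem
      exact le_iSup (fun N : ℕ => (fTZIdeal f).colon ((Ideal.span {Polynomial.X} ^ N : Ideal (Polynomial (MvPolynomial (Fin n) A))) : Set (Polynomial (MvPolynomial (Fin n) A))))
        p.totalDegree hcolon
    · intro hp
      rw [inertiaForms] at hp
      have hdir : Directed (· ≤ ·)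
          (fun N : ℕ => (fTZIdeal f).colon ((Ideal.span {Polynomial.X} ^ N : Ideal (Polynomial (MvPolynomial (Fin n) A))) : Set (Polynomial (MvPolynomial (Fin n) A)))) := by
        intro a b
        exact ⟨max a b,
          Submodule.colon_mono le_rfl (SetLike.coe_subset_coe.mpr (Ideal.pow_le_pow_right (le_max_left a b))),
          Submodule.colon_mono le_rfl (SetLike.coe_subset_coe.mpr (Ideal.pow_le_pow_right (le_max_right a b)))⟩
      obtain ⟨N, hN⟩ := (Submodule.mem_iSup_of_directed _ hdir).mp hp
      rw [Ideal.span_singleton_pow, Ideal.mem_colon_span_singleton, mul_comm] at hN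
      have h0 := phiLaurent_fTZIdeal f hN
      rw [phiLaurent_X_pow_mul_C] at h0
      have hβ : reesBeta f (MvPolynomial.map (algebraMap k A) p) = 0 :=
        ((IsUnit.mul_right_eq_zero (LaurentPolynomial.isUnit_T (R := A) (N : ℤ))).mp h0)
      rw [← eps_reesBeta_map f p, hβ, map_zero]
end

section
/- Let k be a commutative ring, A a Z-graded k-algebra, f₁,…,fₙ ∈ A homogeneous of degree d ≥ 1, and β : A[T₁,…,Tₙ] → A[Z,Z⁻¹] the A-algebra morphism sending Tᵢ to fᵢ·Z⁻¹. If J is an ideal of A such that H⁰_J(A) = 0, then ker(β) = TF_{J·A[T₁,…,Tₙ]}(ker(β)), i.e. the ideal ker(β) of A[T₁,…,Tₙ] equals its own ideal of inertia forms with respect to the extension of J to A[T₁,…,Tₙ]. -/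
lemma mem_inertiaForms_iff {R : Type*} [CommRing R] (J I : Ideal R) (x : R) :
    x ∈ inertiaForms J I ↔ ∃ m : ℕ, x ∈ I.colon ((J ^ m : Ideal R) : Set R) := by
  have hdir : Directed (· ≤ ·) fun m : ℕ => I.colon ((J ^ m : Ideal R) : Set R) := fun a b => ⟨a + b, fun y hy => Submodule.mem_colon.2 fun p hp =>
      Submodule.mem_colon.1 hy p (Ideal.pow_le_pow_right (Nat.le_add_right a b) hp),
    fun y hy => Submodule.mem_colon.2 fun p hp =>
      Submodule.mem_colon.1 hy p (Ideal.pow_le_pow_right (Nat.le_add_left b a) hp)⟩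
  exact Submodule.mem_iSup_of_directed _ hdir

/-- if `J` is an ideal of `A` with `H⁰_J(A) = 0` (i.e. `A` has no `J`-torsion,
encoded as `inertiaForms J ⊥ = ⊥`), then `ker β = TF_{J·A[T₁,…,Tₙ]}(ker β)`. -/
theorem statement6 {k A : Type*} [CommRing k] [CommRing A] [Algebra k A]
    (𝒜 : ℤ → Submodule k A) [GradedAlgebra 𝒜]
    (n : ℕ) (d : ℤ) (hd : 1 ≤ d) (f : Fin n → A) (hf : ∀ i, f i ∈ 𝒜 d)
    (J : Ideal A) (hJ : inertiaForms J (⊥ : Ideal A) = ⊥) :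
    RingHom.ker (reesBeta f)
      = inertiaForms (Ideal.map (MvPolynomial.C : A →+* MvPolynomial (Fin n) A) J)
          (RingHom.ker (reesBeta f)) := by
  apply le_antisymm
  · intro P hP
    rw [mem_inertiaForms_iff]
    exact ⟨0, Submodule.mem_colon.2 fun p _ => Ideal.mul_mem_right _ _ hP⟩
  · intro P hP
    rw [mem_inertiaForms_iff] at hP
    obtain ⟨m, hm⟩ := hP
    -- every coefficient of β P is killed by J^m
    have key : ∀ y ∈ J ^ m, ∀ z : ℤ, y * (reesBeta f P).coeff z = 0 := by
      intro y hy z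
      have hCy : (MvPolynomial.C y : MvPolynomial (Fin n) A)
          ∈ (Ideal.map (MvPolynomial.C : A →+* MvPolynomial (Fin n) A) J) ^ m := by
        rw [← Ideal.map_pow]
        exact Ideal.mem_map_of_mem _ hy
      have h0 : reesBeta f (MvPolynomial.C y * P) = 0 := by
        have := Submodule.mem_colon.1 hm _ hCy
        rw [smul_eq_mul, mul_comm] at this
        exact this
      have h1 : reesBeta f (MvPolynomial.C y * P) = y • reesBeta f P := by
        rw [map_mul]
        show (reesBeta f) (MvPolynomial.C y) * (reesBeta f) P = _
        rw [show (reesBeta f) (MvPolynomial.C y) = algebraMap A _ y from MvPolynomial.aeval_C _ y,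
          ← Algebra.smul_def]
      rw [h1] at h0
      have := congrArg (fun q : LaurentPolynomial A => q.coeff z) h0
      simpa [Finsupp.smul_apply, AddMonoidAlgebra.coeff_smul_apply] using this
    show reesBeta f P = 0
    apply LaurentPolynomial.ext
    intro z
    have : (reesBeta f P).coeff z ∈ inertiaForms J (⊥ : Ideal A) := by
      rw [mem_inertiaForms_iff]
      exact ⟨m, Submodule.mem_colon.2 fun p hp => by
        simpa [mul_comm] using key p hp z⟩
    rw [hJ] at this
    simpa using this
end
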